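/- If a Stieltjes moment sequence (a_n) has at most exponential growth (a_n ≤ M R^n for some M, R), then the exponential growth rate limsup a_n^{1/n} equals the supremum of the support of the representing measure μ on [0,∞). -/

import Mathlib

open MeasureTheory Filter Topology

private lemma aux_rpow_pow (b c : ℝ) (hb : 0 ≤ b) (hc : 0 ≤ c) (n : ℕ) (hn : 1 ≤ n) :
    (b ^ n * c) ^ (1 / (n : ℝ)) = b * c ^ (1 / (n : ℝ)) := by
  have hn' : (n : ℝ) ≠ 0 := Nat.cast_ne_zero.2 (by omega)
  rw [Real.mul_rpow (pow_nonneg hb n) hc, ← Real.rpow_natCast b, ← Real.rpow_mul hb,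
    mul_one_div_cancel hn', Real.rpow_one]

private lemma aux_tendsto_rpow (c : ℝ) (hc : 0 < c) :
    Tendsto (fun n : ℕ => c ^ (1 / (n : ℝ))) atTop (𝓝 1) := by
  have h : ∀ n : ℕ, c ^ (1 / (n : ℝ)) = Real.exp (Real.log c * (1 / (n : ℝ))) := fun n =>
    Real.rpow_def_of_pos hc _
  simp only [h]
  have h2 : Tendsto (fun n : ℕ => Real.log c * (1 / (n : ℝ))) atTop (𝓝 0) := by
    simpa using tendsto_const_nhds.mul (tendsto_one_div_atTop_nhds_zero_nat (𝕜 := ℝ))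
  simpa [Function.comp_def] using (Real.continuous_exp.tendsto 0).comp h2

/-- If a Stieltjes moment sequence `a n = ∫ x^n dμ` (with `μ` a nonzero positive
measure on `[0,∞)`) has at most exponential growth `a n ≤ M R^n`, then the
exponential growth rate `limsup (a n)^(1/n)` equals the supremum of the support
of `μ`. -/
theorem stieltjes_growth_eq_sSup_support (μ : Measure ℝ) (a : ℕ → ℝ) (M R : ℝ)
    (hM : 0 < M) (hR : 0 < R) (hμ : μ ≠ 0) (hneg : μ (Set.Iio 0) = 0)
    (hint : ∀ n : ℕ, Integrable (fun x => x ^ n) μ)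
    (hmom : ∀ n : ℕ, ∫ x, x ^ n ∂μ = a n)
    (hgrow : ∀ n : ℕ, a n ≤ M * R ^ n) :
    Filter.limsup (fun n : ℕ => (a n) ^ (1 / (n : ℝ))) Filter.atTop
      = sSup {x : ℝ | ∀ ε > 0, 0 < μ (Set.Ioo (x - ε) (x + ε))} := by
  set S := {x : ℝ | ∀ ε > 0, 0 < μ (Set.Ioo (x - ε) (x + ε))} with hSdef
  set f := fun n : ℕ => (a n) ^ (1 / (n : ℝ)) with hfdef
  -- the measure is finite
  haveI hfin : IsFiniteMeasure μ := by
    have h0 := hint 0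
    simp only [pow_zero] at h0
    rcases integrable_const_iff.mp h0 with h | h
    · exact absurd h one_ne_zero
    · exact h
  have haepos : ∀ᵐ y ∂μ, 0 ≤ y := by
    rw [ae_iff]
    convert hneg using 2
    ext y
    simp [not_le]
  have ha0 : ∀ n, 0 ≤ a n := fun n => by
    rw [← hmom n]
    exact integral_nonneg_of_ae (haepos.mono fun y hy => pow_nonneg hy n)
  have hf0 : ∀ n, 0 ≤ f n := fun n => Real.rpow_nonneg (ha0 n) _
  -- nonnegativity of points of S
  have hSnonneg : ∀ x ∈ S, (0:ℝ) ≤ x := by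
    intro x hx
    by_contra h
    push_neg at h
    have h1 := hx (-x) (by linarith)
    have hsub : Set.Ioo (x - -x) (x + -x) ⊆ Set.Iio 0 := by
      intro y hy
      simp only [Set.mem_Ioo] at hy
      simp only [Set.mem_Iio]
      linarith [hy.2]
    have h2 := lt_of_lt_of_le h1 (measure_mono hsub)
    rw [hneg] at h2
    exact lt_irrefl _ h2
  -- upper bound for f
  set M' := max M 1 with hM'def
  have hM'1 : (1:ℝ) ≤ M' := le_max_right _ _
  have hfub : ∀ n : ℕ, 1 ≤ n → f n ≤ M' * R := by
    intro n hn
    have h1 : a n ≤ (M' * R) ^ n := by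
      calc a n ≤ M * R ^ n := hgrow n
        _ ≤ M' ^ n * R ^ n :=
            mul_le_mul_of_nonneg_right
              (calc M ≤ M' := le_max_left _ _
                _ ≤ M' ^ n := le_self_pow₀ hM'1 (by omega))
              (pow_nonneg hR.le n)
        _ = (M' * R) ^ n := (mul_pow _ _ _).symm
    have hMR : 0 ≤ M' * R := by positivity
    calc f n ≤ ((M' * R) ^ n) ^ (1 / (n : ℝ)) :=
          Real.rpow_le_rpow (ha0 n) h1 (by positivity)
      _ = M' * R * 1 ^ (1 / (n : ℝ)) := by
          rw [show (M' * R) ^ n = (M' * R) ^ n * 1 by ring]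
          exact aux_rpow_pow _ _ hMR zero_le_one n hn
      _ = M' * R := by rw [Real.one_rpow, mul_one]
  have hbddf : IsBoundedUnder (· ≤ ·) atTop f :=
    ⟨M' * R, eventually_map.2 (eventually_atTop.2 ⟨1, hfub⟩)⟩
  have hcobddf : IsCoboundedUnder (· ≤ ·) atTop f :=
    (isBoundedUnder_of (r := (· ≥ ·)) ⟨0, fun n => hf0 n⟩).isCoboundedUnder_le
  -- limsup f is nonnegative
  have hlimsup0 : (0:ℝ) ≤ limsup f atTop := by
    calc (0:ℝ) = limsup (fun _ : ℕ => (0:ℝ)) atTop := (limsup_const (0:ℝ)).symm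
      _ ≤ limsup f atTop :=
          limsup_le_limsup (u := fun _ : ℕ => (0:ℝ)) (v := f)
            (Eventually.of_forall hf0)
            ((isBoundedUnder_of (r := (· ≥ ·)) ⟨(0:ℝ), fun _ => le_rfl⟩).isCoboundedUnder_le)
            hbddf
  -- lower bound: every point of S is ≤ limsup f
  have hlow : ∀ x ∈ S, x ≤ limsup f atTop := by
    intro x hx
    -- for every 0 ≤ t < x, t ≤ limsup f
    have key : ∀ t : ℝ, 0 ≤ t → t < x → t ≤ limsup f atTop := by
      intro t ht0 htx
      set I := Set.Ioo (x - (x - t)) (x + (x - t)) with hIdef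
      have hμI := hx (x - t) (by linarith)
      set c := (μ I).toReal with hcdef
      have hc : 0 < c := ENNReal.toReal_pos hμI.ne' (measure_ne_top μ I)
      have hineq : ∀ n : ℕ, t ^ n * c ≤ a n := by
        intro n
        have h1 : t ^ n * c ≤ ∫ y in I, y ^ n ∂μ := by
          refine setIntegral_ge_of_const_le_real measurableSet_Ioo (measure_ne_top μ I)
            (fun y hy => ?_) (hint n).integrableOn
          have hty : t ≤ y := by
            simp only [hIdef, Set.mem_Ioo] at hy
            linarith [hy.1]
          exact pow_le_pow_left₀ ht0 hty n
        have h2 : ∫ y in I, y ^ n ∂μ ≤ ∫ y, y ^ n ∂μ :=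
          setIntegral_le_integral (hint n) (haepos.mono fun y hy => pow_nonneg hy n)
        rw [← hmom n]
        exact h1.trans h2
      have hg : Tendsto (fun n : ℕ => t * c ^ (1 / (n : ℝ))) atTop (𝓝 t) := by
        simpa using tendsto_const_nhds.mul (aux_tendsto_rpow c hc)
      have hgf : ∀ᶠ n : ℕ in atTop, t * c ^ (1 / (n : ℝ)) ≤ f n := by
        filter_upwards [eventually_ge_atTop 1] with n hn
        calc t * c ^ (1 / (n : ℝ)) = (t ^ n * c) ^ (1 / (n : ℝ)) :=
              (aux_rpow_pow t c ht0 hc.le n hn).symm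
          _ ≤ f n := Real.rpow_le_rpow (by positivity) (hineq n) (by positivity)
      calc t = limsup (fun n : ℕ => t * c ^ (1 / (n : ℝ))) atTop := hg.limsup_eq.symm
        _ ≤ limsup f atTop :=
            limsup_le_limsup hgf (hg.isBoundedUnder_ge.isCoboundedUnder_le) hbddf
    by_contra hcon
    push_neg at hcon
    have ht := key ((limsup f atTop + x) / 2) (by linarith) (by linarith)
    linarith
  -- S is nonempty
  have hSne : S.Nonempty := by
    obtain ⟨x, -, hx⟩ := exists_mem_forall_mem_nhdsWithin_pos_measure
      (μ := μ) (s := Set.univ) (by simpa using Measure.measure_univ_ne_zero.mpr hμ)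
    refine ⟨x, fun ε hε => ?_⟩
    exact hx _ (by rw [nhdsWithin_univ]; exact Ioo_mem_nhds (by linarith) (by linarith))
  have hbddS : BddAbove S := ⟨limsup f atTop, fun x hx => hlow x hx⟩
  have hs0 : 0 ≤ sSup S := by
    obtain ⟨x, hx⟩ := hSne
    exact (hSnonneg x hx).trans (le_csSup hbddS hx)
  -- complement of S is null
  have hcompl : μ Sᶜ = 0 := by
    refine measure_null_of_locally_null _ (fun x hx => ?_)
    simp only [hSdef, Set.mem_compl_iff, Set.mem_setOf_eq, not_forall] at hx
    obtain ⟨ε, hε, h0⟩ := hx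
    exact ⟨Set.Ioo (x - ε) (x + ε),
      mem_nhdsWithin_of_mem_nhds (Ioo_mem_nhds (by linarith) (by linarith)),
      le_zero_iff.mp (not_lt.mp h0)⟩
  have haeS : ∀ᵐ y ∂μ, y ∈ S := by
    rw [ae_iff]
    exact hcompl
  set C := (μ Set.univ).toReal with hCdef
  have hC : 0 < C := ENNReal.toReal_pos (Measure.measure_univ_ne_zero.mpr hμ) (measure_ne_top _ _)
  have hub : ∀ n : ℕ, a n ≤ sSup S ^ n * C := by
    intro n
    rw [← hmom n]
    calc ∫ y, y ^ n ∂μ ≤ ∫ _y, sSup S ^ n ∂μ := by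
          refine integral_mono_ae (hint n) (integrable_const _) ?_
          filter_upwards [haeS, haepos] with y hyS hy0
          exact pow_le_pow_left₀ hy0 (le_csSup hbddS hyS) n
      _ = sSup S ^ n * C := by rw [integral_const, smul_eq_mul, mul_comm]; rfl
  have hupper : limsup f atTop ≤ sSup S := by
    have hg : Tendsto (fun n : ℕ => sSup S * C ^ (1 / (n : ℝ))) atTop (𝓝 (sSup S)) := by
      simpa using tendsto_const_nhds.mul (aux_tendsto_rpow C hC)
    have hev : ∀ᶠ n : ℕ in atTop, f n ≤ sSup S * C ^ (1 / (n : ℝ)) := by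
      filter_upwards [eventually_ge_atTop 1] with n hn
      calc f n ≤ (sSup S ^ n * C) ^ (1 / (n : ℝ)) :=
            Real.rpow_le_rpow (ha0 n) (hub n) (by positivity)
        _ = sSup S * C ^ (1 / (n : ℝ)) := aux_rpow_pow _ _ hs0 hC.le n hn
    calc limsup f atTop ≤ limsup (fun n : ℕ => sSup S * C ^ (1 / (n : ℝ))) atTop :=
          limsup_le_limsup hev hcobddf hg.isBoundedUnder_le
      _ = sSup S := hg.limsup_eq
  exact le_antisymm hupper (csSup_le hSne hlow)
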